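/- Let G be a connected simple graph with n vertices and m edges. Then BH(G) ≥ 16nm⁴/(2m + M_1(G))³, with equality if and only if G is the complete graph K_n. -/

import Mathlib

open Finset Polynomial

section Aux
open Matrix

variable {m : Type*} [Fintype m] [DecidableEq m]

lemma myTraceEig {A : Matrix m m ℝ} (hA : A.IsHermitian) :
    A.trace = ∑ i, hA.eigenvalues i := by
  conv_lhs => rw [hA.spectral_theorem, Unitary.conjStarAlgAut_apply]
  rw [Matrix.trace_mul_cycle, Unitary.coe_star_mul_self, Matrix.one_mul, Matrix.trace_diagonal]
  simp [RCLike.ofReal_real_eq_id]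

lemma myTraceEigSq {A : Matrix m m ℝ} (hA : A.IsHermitian) :
    (A * A).trace = ∑ i, hA.eigenvalues i ^ 2 := by
  have hU : (star (hA.eigenvectorUnitary : Matrix m m ℝ)) * (hA.eigenvectorUnitary : Matrix m m ℝ) = 1 :=
    Unitary.coe_star_mul_self _
  conv_lhs => rw [hA.spectral_theorem, Unitary.conjStarAlgAut_apply]
  simp only [Matrix.mul_assoc]
  rw [show ∀ X : Matrix m m ℝ, (star (hA.eigenvectorUnitary : Matrix m m ℝ)) * ((hA.eigenvectorUnitary : Matrix m m ℝ) * X) = X from fun X => by rw [← Matrix.mul_assoc, hU, Matrix.one_mul]]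
  rw [Matrix.trace_mul_comm]
  simp only [Matrix.mul_assoc]
  rw [hU, Matrix.mul_one, Matrix.diagonal_mul_diagonal, Matrix.trace_diagonal]
  simp [RCLike.ofReal_real_eq_id, pow_two]

lemma mySmulOfEig {A : Matrix m m ℝ} (hA : A.IsHermitian) (c : ℝ)
    (h : ∀ i, hA.eigenvalues i ^ 2 = c * hA.eigenvalues i) : A * A = c • A := by
  have hU : (star (hA.eigenvectorUnitary : Matrix m m ℝ)) * (hA.eigenvectorUnitary : Matrix m m ℝ) = 1 :=
    Unitary.coe_star_mul_self _
  have hD : (diagonal (RCLike.ofReal ∘ hA.eigenvalues) : Matrix m m ℝ) *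
      diagonal (RCLike.ofReal ∘ hA.eigenvalues) = c • diagonal (RCLike.ofReal ∘ hA.eigenvalues) := by
    rw [Matrix.diagonal_mul_diagonal]
    ext i j
    by_cases hij : i = j
    · subst hij
      simp only [Matrix.diagonal_apply_eq, Matrix.smul_apply, Pi.mul_apply, Function.comp_apply,
        RCLike.ofReal_real_eq_id, id, smul_eq_mul]
      simpa [pow_two] using h i
    · simp [Matrix.diagonal_apply_ne _ hij, Matrix.smul_apply]
  conv_lhs => rw [hA.spectral_theorem, Unitary.conjStarAlgAut_apply]
  conv_rhs => rw [hA.spectral_theorem, Unitary.conjStarAlgAut_apply]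
  simp only [Matrix.mul_assoc]
  rw [show ∀ X : Matrix m m ℝ, (star (hA.eigenvectorUnitary : Matrix m m ℝ)) * ((hA.eigenvectorUnitary : Matrix m m ℝ) * X) = X from fun X => by rw [← Matrix.mul_assoc, hU, Matrix.one_mul]]
  rw [← Matrix.mul_assoc (diagonal _), hD]
  simp [Matrix.smul_mul, Matrix.mul_smul]

lemma myEigOfSmul {A : Matrix m m ℝ} (hA : A.IsHermitian) (c : ℝ)
    (h : A * A = c • A) (i : m) : hA.eigenvalues i ^ 2 = c * hA.eigenvalues i := by
  have hv := hA.mulVec_eigenvectorBasis i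
  have h1 : (A * A) *ᵥ ⇑(hA.eigenvectorBasis i) = (hA.eigenvalues i ^ 2) • ⇑(hA.eigenvectorBasis i) := by
    rw [← Matrix.mulVec_mulVec, hv, Matrix.mulVec_smul, hv, smul_smul, ← pow_two]
  have h2 : (A * A) *ᵥ ⇑(hA.eigenvectorBasis i) = (c * hA.eigenvalues i) • ⇑(hA.eigenvectorBasis i) := by
    rw [h, Matrix.smul_mulVec, hv, smul_smul]
  have h3 := h1.symm.trans h2
  have hne : (⇑(hA.eigenvectorBasis i) : m → ℝ) ≠ 0 := by
    have := hA.eigenvectorBasis.orthonormal.ne_zero i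
    intro hc
    apply this
    ext j
    exact congrFun hc j
  obtain ⟨j, hj⟩ := Function.ne_iff.mp hne
  have h5 := congrFun h3 j
  simp only [Pi.smul_apply, smul_eq_mul] at h5
  exact mul_right_cancel₀ hj h5

lemma myCSid {ι : Type*} (s : Finset ι) (f g : ι → ℝ) :
    ∑ i ∈ s, ∑ j ∈ s, (f i * g j - f j * g i) ^ 2
      = 2 * ((∑ i ∈ s, f i ^ 2) * (∑ i ∈ s, g i ^ 2)) - 2 * (∑ i ∈ s, f i * g i) ^ 2 := by
  have h : ∀ i j, (f i * g j - f j * g i) ^ 2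
      = f i ^ 2 * g j ^ 2 + f j ^ 2 * g i ^ 2 - 2 * ((f i * g i) * (f j * g j)) := by
    intro i j; ring
  simp_rw [h, Finset.sum_sub_distrib, Finset.sum_add_distrib, ← Finset.mul_sum, ← Finset.sum_mul,
    ← Finset.mul_sum]
  ring

lemma myCSineq {ι : Type*} (s : Finset ι) (f g : ι → ℝ) :
    (∑ i ∈ s, f i * g i) ^ 2 ≤ (∑ i ∈ s, f i ^ 2) * (∑ i ∈ s, g i ^ 2) := by
  have h := myCSid s f g
  have h2 : (0:ℝ) ≤ ∑ i ∈ s, ∑ j ∈ s, (f i * g j - f j * g i) ^ 2 :=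
    Finset.sum_nonneg fun i _ => Finset.sum_nonneg fun j _ => sq_nonneg _
  linarith

lemma myCSeq {ι : Type*} (s : Finset ι) (f g : ι → ℝ)
    (h : (∑ i ∈ s, f i * g i) ^ 2 = (∑ i ∈ s, f i ^ 2) * (∑ i ∈ s, g i ^ 2)) :
    ∀ i ∈ s, ∀ j ∈ s, f i * g j = f j * g i := by
  have h0 : ∑ i ∈ s, ∑ j ∈ s, (f i * g j - f j * g i) ^ 2 = 0 := by
    rw [myCSid]; linarith
  intro i hi j hj
  have := Finset.sum_eq_zero_iff_of_nonneg
    (fun i _ => Finset.sum_nonneg fun j _ => sq_nonneg (f i * g j - f j * g i)) |>.mp h0 i hi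
  have := Finset.sum_eq_zero_iff_of_nonneg (fun j _ => sq_nonneg _) |>.mp this j hj
  have := pow_eq_zero_iff (n := 2) (by norm_num) |>.mp this
  linarith

variable {V : Type*} [Fintype V] [DecidableEq V] (G : SimpleGraph V) [DecidableRel G.Adj]

lemma myLapApply (a b : V) : G.lapMatrix ℝ a b
    = (if a = b then (G.degree a : ℝ) else 0) - (if G.Adj a b then 1 else 0) := by
  simp [SimpleGraph.lapMatrix, SimpleGraph.degMatrix, Matrix.sub_apply, Matrix.diagonal_apply]

lemma myLapSymm (a b : V) : G.lapMatrix ℝ a b = G.lapMatrix ℝ b a := by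
  rw [myLapApply, myLapApply]
  congr 1
  · by_cases h : a = b
    · subst h; rfl
    · rw [if_neg h, if_neg (fun h' => h h'.symm)]
  · simp [G.adj_comm]

lemma myTraceL : (G.lapMatrix ℝ).trace = ∑ v, (G.degree v : ℝ) := by
  rw [Matrix.trace]
  apply Finset.sum_congr rfl
  intro v _
  simp [Matrix.diag, myLapApply, G.loopless.irrefl v]

lemma myRowSq (v : V) : ∑ k, (G.lapMatrix ℝ v k) ^ 2 = (G.degree v : ℝ) ^ 2 + G.degree v := by
  have h : ∀ k, (G.lapMatrix ℝ v k) ^ 2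
      = (if v = k then (G.degree v : ℝ) ^ 2 else 0) + (if G.Adj v k then 1 else 0) := by
    intro k
    by_cases hk : v = k
    · subst hk; simp [myLapApply, G.loopless.irrefl v]
    · by_cases ha : G.Adj v k <;> simp [myLapApply, hk, ha]
  simp_rw [h, Finset.sum_add_distrib, Finset.sum_ite_eq, Finset.mem_univ, if_true]
  congr 1
  rw [← SimpleGraph.degree_eq_sum_if_adj]

lemma myTraceL2 : ((G.lapMatrix ℝ) * (G.lapMatrix ℝ)).trace
    = ∑ v, ((G.degree v : ℝ) ^ 2 + (G.degree v : ℝ)) := by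
  rw [Matrix.trace]
  apply Finset.sum_congr rfl
  intro v _
  rw [Matrix.diag_apply, Matrix.mul_apply, ← myRowSq G v]
  apply Finset.sum_congr rfl
  intro k _
  rw [pow_two, myLapSymm G k v]

lemma myOffDiag {a b : V} (hab : a ≠ b) (hadj : ¬ G.Adj a b) :
    ((G.lapMatrix ℝ) * (G.lapMatrix ℝ)) a b
      = ∑ k, if G.Adj a k ∧ G.Adj k b then (1:ℝ) else 0 := by
  rw [Matrix.mul_apply]
  apply Finset.sum_congr rfl
  intro k _
  by_cases hka : k = a
  · subst hka; simp [myLapApply, G.loopless, hab, hadj]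
  by_cases hkb : k = b
  · subst hkb; simp [myLapApply, G.loopless, hab, hadj]
  rw [myLapApply, myLapApply]
  rw [if_neg (fun h => hka h.symm), if_neg hkb]
  by_cases h1 : G.Adj a k <;> by_cases h2 : G.Adj k b <;> simp [h1, h2]

lemma myCompleteEntry (hcomp : ∀ a b : V, a ≠ b → G.Adj a b) (a b : V) :
    G.lapMatrix ℝ a b = (if a = b then (Fintype.card V : ℝ) else 0) - 1 := by
  have hdeg : (G.degree a : ℝ) = (Fintype.card V : ℝ) - 1 := by
    have hnb : G.neighborFinset a = Finset.univ.erase a := by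
      ext k
      simp only [SimpleGraph.mem_neighborFinset, Finset.mem_erase, Finset.mem_univ, and_true]
      exact ⟨fun h => (G.ne_of_adj h).symm, fun h => hcomp a k (fun h' => h h'.symm)⟩
    have : G.degree a = Fintype.card V - 1 := by
      rw [SimpleGraph.degree, hnb, Finset.card_erase_of_mem (Finset.mem_univ a),
        Finset.card_univ]
    rw [this, Nat.cast_sub (Fintype.card_pos_iff.mpr ⟨a⟩), Nat.cast_one]
  rw [myLapApply]
  by_cases hab : a = b
  · subst hab; simp [G.loopless, hdeg]
  · simp [hab, hcomp a b hab]

lemma myCompleteSq (hcomp : ∀ a b : V, a ≠ b → G.Adj a b) :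
    (G.lapMatrix ℝ) * (G.lapMatrix ℝ) = (Fintype.card V : ℝ) • (G.lapMatrix ℝ) := by
  set c : ℝ := (Fintype.card V : ℝ) with hc
  ext a b
  rw [Matrix.mul_apply, Matrix.smul_apply, myCompleteEntry G hcomp]
  have h : ∀ k, G.lapMatrix ℝ a k * G.lapMatrix ℝ k b
      = (if a = k then c else 0) * (if k = b then c else 0)
        - (if a = k then c else 0) - (if k = b then c else 0) + 1 := by
    intro k
    rw [myCompleteEntry G hcomp, myCompleteEntry G hcomp]
    ring
  simp_rw [h, Finset.sum_add_distrib, Finset.sum_sub_distrib, ite_mul, zero_mul, mul_ite, mul_zero,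
    Finset.sum_ite_eq, Finset.sum_ite_eq', Finset.mem_univ, if_true, Finset.sum_const,
    Finset.card_univ, nsmul_eq_mul, mul_one]
  by_cases hab : a = b
  · subst hab; simp [← hc]; ring
  · simp [hab]; linarith

end Aux

/-- The eigenvalues of the Laplacian matrix of `G` over `ℝ`, as produced (in no
particular order) by the spectral theorem for symmetric matrices. -/
noncomputable def lapEigsUnordered {V : Type*} [Fintype V] [DecidableEq V]
    (G : SimpleGraph V) [DecidableRel G.Adj] : V → ℝ :=
  (SimpleGraph.posSemidef_lapMatrix (R := ℝ) (G := G)).1.eigenvalues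

/-- `μ : Fin n → ℝ` lists the eigenvalues of the Laplacian matrix of `G`
in nondecreasing order (so, `0`-based, `μ ⟨0,_⟩ = λ₁ ≤ μ ⟨1,_⟩ = λ₂ ≤ ⋯`). -/
def IsLapEigSeq {V : Type*} [Fintype V] [DecidableEq V] (G : SimpleGraph V)
    [DecidableRel G.Adj] {n : ℕ} (μ : Fin n → ℝ) : Prop :=
  Monotone μ ∧ ∃ e : V ≃ Fin n, ∀ v, lapEigsUnordered G v = μ (e v)

set_option maxHeartbeats 4000000 in
theorem statement_3 {n : ℕ} (hn : 2 ≤ n) (G : SimpleGraph (Fin n)) [DecidableRel G.Adj]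
    (hG : G.Connected) (μ : Fin n → ℝ) (hμ : IsLapEigSeq G μ)
    (hμ1 : μ ⟨0, by omega⟩ = 0) (hμ2 : 0 < μ ⟨1, by omega⟩) :
    (n : ℝ) * ∑ i ∈ univ.filter (fun i : Fin n => 0 < i.val), 1 / μ i ^ 2 ≥ 16 * (n : ℝ) * (G.edgeFinset.card : ℝ) ^ 4 / (2 * (G.edgeFinset.card : ℝ) + ∑ v, ((G.degree v : ℝ)) ^ 2) ^ 3 ∧
    ((n : ℝ) * ∑ i ∈ univ.filter (fun i : Fin n => 0 < i.val), 1 / μ i ^ 2 = 16 * (n : ℝ) * (G.edgeFinset.card : ℝ) ^ 4 / (2 * (G.edgeFinset.card : ℝ) + ∑ v, ((G.degree v : ℝ)) ^ 2) ^ 3 ↔ G = ⊤) := by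
  classical
  obtain ⟨hmono, e, he⟩ := hμ
  have hA : (G.lapMatrix ℝ).IsHermitian := (SimpleGraph.posSemidef_lapMatrix (R := ℝ) (G := G)).1
  have heig : ∀ v, hA.eigenvalues v = μ (e v) := he
  set z : Fin n := ⟨0, by omega⟩ with hzdef
  set o : Fin n := ⟨1, by omega⟩ with hodef
  set s : Finset (Fin n) := univ.filter (fun i : Fin n => 0 < i.val) with hsdef
  have ho : o ∈ s := by simp [hsdef, hodef]
  have hpos : ∀ i ∈ s, 0 < μ i := by
    intro i hi
    have hi1 : 0 < i.val := by simpa [hsdef] using hi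
    exact lt_of_lt_of_le hμ2 (hmono (show o ≤ i from by
      rw [Fin.le_def]
      simp only [hodef]
      omega))
  have hne0 : ∀ i ∈ s, μ i ≠ 0 := fun i hi => ne_of_gt (hpos i hi)
  -- reduce full sums to sums over s
  have huniv : ∀ f : ℝ → ℝ, f 0 = 0 → ∑ i : Fin n, f (μ i) = ∑ i ∈ s, f (μ i) := by
    intro f hf
    rw [← Finset.sum_filter_add_sum_filter_not univ (fun i : Fin n => 0 < i.val)
      (fun i => f (μ i))]
    have : ∑ i ∈ univ.filter (fun i : Fin n => ¬ 0 < i.val), f (μ i) = 0 := by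
      apply Finset.sum_eq_zero
      intro i hi
      have : i = z := by
        have := (Finset.mem_filter.mp hi).2
        apply Fin.ext
        simp [hzdef]
        omega
      rw [this, hμ1, hf]
    rw [this, add_zero]
  have hVsum : ∀ f : ℝ → ℝ, ∑ v : Fin n, f (hA.eigenvalues v) = ∑ i : Fin n, f (μ i) := by
    intro f
    rw [show (fun v => f (hA.eigenvalues v)) = fun v => f (μ (e v)) from funext fun v => by
      rw [heig v]]
    exact Fintype.sum_equiv e _ _ (fun v => rfl)
  have hdegsum : ∑ v : Fin n, (G.degree v : ℝ) = 2 * (G.edgeFinset.card : ℝ) := by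
    rw [← Nat.cast_sum]
    rw [SimpleGraph.sum_degrees_eq_twice_card_edges]
    push_cast
    ring
  have hS1 : ∑ i ∈ s, μ i = 2 * (G.edgeFinset.card : ℝ) := by
    have h1 : ∑ i : Fin n, μ i = ∑ i ∈ s, μ i := by simpa using huniv (fun x => x) rfl
    have h2 : ∑ v : Fin n, hA.eigenvalues v = ∑ i : Fin n, μ i := by
      simpa using hVsum (fun x => x)
    rw [← h1, ← h2, ← myTraceEig hA, myTraceL, hdegsum]
  have hS2 : ∑ i ∈ s, μ i ^ 2
      = 2 * (G.edgeFinset.card : ℝ) + ∑ v, ((G.degree v : ℝ)) ^ 2 := by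
    have h1 : ∑ i : Fin n, μ i ^ 2 = ∑ i ∈ s, μ i ^ 2 := by
      simpa using huniv (fun x => x ^ 2) (by norm_num)
    have h2 : ∑ v : Fin n, hA.eigenvalues v ^ 2 = ∑ i : Fin n, μ i ^ 2 := by
      simpa using hVsum (fun x => x ^ 2)
    rw [← h1, ← h2, ← myTraceEigSq hA, myTraceL2, Finset.sum_add_distrib, hdegsum]
    ring
  set M : ℝ := 2 * (G.edgeFinset.card : ℝ) + ∑ v, ((G.degree v : ℝ)) ^ 2 with hMdef
  set T : ℝ := ∑ i ∈ s, 1 / μ i ^ 2 with hTdef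
  set k : ℝ := (s.card : ℝ) with hkdef
  have hTeq : T = ∑ i ∈ s, (1 / μ i) ^ 2 := by
    rw [hTdef]
    exact Finset.sum_congr rfl fun i _ => by rw [div_pow, one_pow]
  have hkeq : ∑ i ∈ s, (1 / μ i) * μ i = k := by
    rw [Finset.sum_congr rfl fun i hi => by
      rw [one_div, inv_mul_cancel₀ (hne0 i hi)]]
    simp [hkdef]
  have hMpos : 0 < M := by
    rw [← hS2]
    exact Finset.sum_pos (fun i hi => pow_pos (hpos i hi) 2) ⟨o, ho⟩
  have hkpos : 0 < k := by
    rw [hkdef]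
    exact_mod_cast Finset.card_pos.mpr ⟨o, ho⟩
  have hS1pos : 0 < 2 * (G.edgeFinset.card : ℝ) := by
    rw [← hS1]
    exact Finset.sum_pos (fun i hi => hpos i hi) ⟨o, ho⟩
  have hTpos : 0 < T := by
    rw [hTeq]
    exact Finset.sum_pos (fun i hi => pow_pos (one_div_pos.mpr (hpos i hi)) 2) ⟨o, ho⟩
  have hnpos : (0:ℝ) < n := by
    have : 0 < n := by omega
    exact_mod_cast this
  clear_value T k M s z o
  -- Cauchy–Schwarz inequalities
  have hCS2 : k ^ 2 ≤ T * M := by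
    have h := myCSineq s (fun i => 1 / μ i) μ
    rw [hkeq] at h
    rw [hTeq, ← hS2]
    exact h
  have hCS1 : (2 * (G.edgeFinset.card : ℝ)) ^ 2 ≤ k * M := by
    have h := myCSineq s μ (fun _ => (1:ℝ))
    simp only [mul_one, one_pow] at h
    rw [Finset.sum_const, nsmul_eq_mul, mul_one, ← hkdef] at h
    rw [← hS1, ← hS2]
    calc (∑ i ∈ s, μ i) ^ 2 ≤ (∑ i ∈ s, μ i ^ 2) * k := h
      _ = k * ∑ i ∈ s, μ i ^ 2 := by ring
  have hm4 : (2 * (G.edgeFinset.card : ℝ)) ^ 4 ≤ k ^ 2 * M ^ 2 := by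
    nlinarith [hCS1, sq_nonneg (2 * (G.edgeFinset.card : ℝ))]
  have h3 : k ^ 2 * M ^ 2 ≤ T * M * M ^ 2 := mul_le_mul_of_nonneg_right hCS2 (sq_nonneg M)
  have hchain : 16 * (G.edgeFinset.card : ℝ) ^ 4 ≤ T * M ^ 3 := by nlinarith [hm4, h3]
  constructor
  · rw [ge_iff_le, div_le_iff₀ (pow_pos hMpos 3)]
    nlinarith [mul_le_mul_of_nonneg_left hchain hnpos.le]
  constructor
  · -- equality implies complete
    intro h
    have h' := congrArg (fun x => x * M ^ 3) h
    rw [div_mul_cancel₀ _ (ne_of_gt (pow_pos hMpos 3))] at h'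
    have hTM : T * M ^ 3 = 16 * (G.edgeFinset.card : ℝ) ^ 4 :=
      mul_left_cancel₀ (ne_of_gt hnpos)
        (show (n:ℝ) * (T * M ^ 3) = (n:ℝ) * (16 * (G.edgeFinset.card : ℝ) ^ 4) by
          linarith [h'])
    have hab : k ^ 2 * M ^ 2 = T * M ^ 3 := by
      apply le_antisymm
      · nlinarith [h3]
      · nlinarith [hm4, hTM]
    have hTMk : T * M = k ^ 2 :=
      mul_right_cancel₀ (pow_ne_zero 2 (ne_of_gt hMpos))
        (show (T * M) * M ^ 2 = k ^ 2 * M ^ 2 by linarith [hab])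
    have heq : (∑ i ∈ s, (1 / μ i) * μ i) ^ 2
        = (∑ i ∈ s, (1 / μ i) ^ 2) * (∑ i ∈ s, μ i ^ 2) := by
      rw [hkeq, ← hTeq, hS2]
      linarith [hTMk]
    have hprop := myCSeq s (fun i => 1 / μ i) μ heq
    have hconst : ∀ i ∈ s, μ i = μ o := by
      intro i hi
      have hij := hprop i hi o ho
      have hi0 := hne0 i hi
      have ho0 := hne0 o ho
      field_simp at hij
      have h2 : μ o * μ o = μ i * μ i := by nlinarith [hij]
      rcases mul_self_eq_mul_self_iff.mp h2 with h'' | h''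
      · exact h''.symm
      · exfalso; nlinarith [hpos i hi, hμ2]
    have hz0 : (z : Fin n).val = 0 := by rw [hzdef]
    have heigprop : ∀ v, hA.eigenvalues v ^ 2 = μ o * hA.eigenvalues v := by
      intro v
      rw [heig v]
      by_cases h0 : 0 < (e v).val
      · have hmem : e v ∈ s := by simp [hsdef, h0]
        rw [hconst (e v) hmem]; ring
      · have hev : e v = z := Fin.ext (by omega)
        rw [hev, hμ1]; ring
    have hLL := mySmulOfEig hA (μ o) heigprop
    have hstep : ∀ a b : Fin n, a ≠ b → ¬ G.Adj a b → ∀ w, ¬ (G.Adj a w ∧ G.Adj w b) := by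
      intro a b hab hadj w hw
      have h0 : ((G.lapMatrix ℝ) * (G.lapMatrix ℝ)) a b = 0 := by
        rw [hLL, Matrix.smul_apply, myLapApply]
        simp [hab, hadj]
      rw [myOffDiag G hab hadj] at h0
      have hterm := (Finset.sum_eq_zero_iff_of_nonneg
        (fun w _ => by split <;> norm_num)).mp h0 w (Finset.mem_univ w)
      rw [if_pos hw] at hterm
      norm_num at hterm
    ext a b
    simp only [SimpleGraph.top_adj]
    constructor
    · exact fun h'' => G.ne_of_adj h''
    · intro hab
      have key : ∀ x y : Fin n, G.Walk x y → x ≠ y → G.Adj x y := by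
        intro x y w
        induction w with
        | nil => intro hcon; exact absurd rfl hcon
        | @cons u v w' ha p ih =>
          intro hxy
          by_cases hv : v = w'
          · subst hv; exact ha
          · have h2 := ih hv
            by_contra hnadj
            exact hstep u w' hxy hnadj v ⟨ha, h2⟩
      exact key a b ((hG.preconnected a b).some) hab
  · -- complete implies equality
    intro htop
    have hcomp : ∀ a b : Fin n, a ≠ b → G.Adj a b := by
      intro a b hab
      rw [htop]
      simpa using hab
    have hLL := myCompleteSq G hcomp
    rw [Fintype.card_fin] at hLL
    have heigs : ∀ i ∈ s, μ i = (n:ℝ) := by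
      intro i hi
      have h2 := myEigOfSmul hA (n:ℝ) hLL (e.symm i)
      rw [heig, e.apply_symm_apply] at h2
      rw [pow_two] at h2
      exact mul_right_cancel₀ (ne_of_gt (hpos i hi)) h2
    have hT : T = k * (1 / (n:ℝ) ^ 2) := by
      rw [hTdef, Finset.sum_congr rfl (fun i hi => by rw [heigs i hi]),
        Finset.sum_const, nsmul_eq_mul, ← hkdef]
    have hS1' : 2 * (G.edgeFinset.card : ℝ) = k * n := by
      rw [← hS1, Finset.sum_congr rfl (fun i hi => heigs i hi),
        Finset.sum_const, nsmul_eq_mul, ← hkdef]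
    have hS2' : M = k * (n:ℝ) ^ 2 := by
      rw [← hS2, Finset.sum_congr rfl (fun i hi => by rw [heigs i hi]),
        Finset.sum_const, nsmul_eq_mul, ← hkdef]
    have hmval : (G.edgeFinset.card : ℝ) = k * n / 2 := by linarith [hS1']
    rw [hT, hS2', hmval]
    have hk0 : k ≠ 0 := ne_of_gt hkpos
    have hn0 : (n:ℝ) ≠ 0 := ne_of_gt hnpos
    field_simp
    ring
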